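/- Define q(m) to be the least prime coprime to m. For every real ε with 0 < ε < 1/2, there exists a positive integer C such that for every integer n ≥ C and every positive integer m < n^{2-ε}, we have 2^{1/ε} · q(m)^{(2-ε)/ε} < n. -/

import Mathlib

/-- The least prime not dividing `m`. -/
noncomputable def leastPrimeCoprime (m : ℕ) : ℕ := sInf {p : ℕ | p.Prime ∧ ¬ p ∣ m}

open Nat Finset

lemma nth_prime_le_two_pow (i : ℕ) : Nat.nth Nat.Prime i ≤ 2 ^ (i + 1) := by
  induction i with
  | zero => simp [Nat.nth_prime_zero_eq_two]
  | succ i ih =>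
    obtain ⟨r, hr, h1, h2⟩ := Nat.exists_prime_lt_and_le_two_mul (Nat.nth Nat.Prime i)
      (Nat.prime_nth_prime i).ne_zero
    have hle : Nat.nth Nat.Prime (i + 1) ≤ r := by
      by_contra h
      push_neg at h
      exact absurd (Nat.le_nth_of_lt_nth_succ h hr) (by omega)
    calc Nat.nth Nat.Prime (i + 1) ≤ r := hle
      _ ≤ 2 * Nat.nth Nat.Prime i := h2
      _ ≤ 2 * 2 ^ (i + 1) := by exact Nat.mul_le_mul_left 2 ih
      _ = 2 ^ (i + 1 + 1) := by ring

lemma factorial_le_prod (s : Finset ℕ) (h : ∀ x ∈ s, 2 ≤ x) :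
    (s.card + 1)! ≤ ∏ x ∈ s, x := by
  induction s using Finset.strongInduction with
  | _ s ih =>
    rcases s.eq_empty_or_nonempty with rfl | hs
    · simp
    · have hM : s.max' hs ∈ s := s.max'_mem hs
      have hsub : s ⊆ Finset.Icc 2 (s.max' hs) := by
        intro x hx
        exact Finset.mem_Icc.2 ⟨h x hx, s.le_max' x hx⟩
      have hcard : s.card ≤ s.max' hs - 1 := by
        have := Finset.card_le_card hsub
        simpa [Nat.card_Icc] using this
      have h2M : 2 ≤ s.max' hs := h _ hM
      have hMc : s.card + 1 ≤ s.max' hs := by omega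
      have herase := ih (s.erase (s.max' hs)) (Finset.erase_ssubset hM)
        (fun x hx => h x (Finset.mem_of_mem_erase hx))
      have hcarde : (s.erase (s.max' hs)).card = s.card - 1 :=
        Finset.card_erase_of_mem hM
      have hcpos : 1 ≤ s.card := Finset.Nonempty.card_pos hs
      rw [← Finset.mul_prod_erase s _ hM]
      have : (s.card + 1)! = (s.card + 1) * s.card ! := rfl
      rw [this]
      have : (s.card - 1 + 1) = s.card := by omega
      calc (s.card + 1) * s.card ! ≤ s.max' hs * ((s.erase (s.max' hs)).card + 1)! := by
            apply Nat.mul_le_mul hMc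
            rw [hcarde, this]
        _ ≤ s.max' hs * ∏ x ∈ s.erase (s.max' hs), x := Nat.mul_le_mul_left _ herase

lemma pow_le_pow_self_mul_factorial (a n : ℕ) (ha : 1 ≤ a) : a ^ n ≤ a ^ a * n ! := by
  induction n with
  | zero => simpa using Nat.one_le_pow _ _ ha
  | succ n ih =>
    rcases le_or_gt (n + 1) a with h | h
    · calc a ^ (n + 1) ≤ a ^ a := Nat.pow_le_pow_right ha h
        _ ≤ a ^ a * (n + 1)! := Nat.le_mul_of_pos_right _ (Nat.factorial_pos _)
    · calc a ^ (n + 1) = a ^ n * a := by ring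
        _ ≤ a ^ a * n ! * a := Nat.mul_le_mul_right _ ih
        _ ≤ a ^ a * n ! * (n + 1) := Nat.mul_le_mul_left _ (by omega)
        _ = a ^ a * (n + 1)! := by rw [Nat.factorial_succ]; ring

/-- key: there is k with (k+1)! ≤ m and q ≤ 2^(k+1) -/
lemma key_lemma (m : ℕ) (hm : 0 < m) :
    ∃ k : ℕ, (k + 1)! ≤ m ∧ leastPrimeCoprime m ≤ 2 ^ (k + 1) := by
  have hne : {p : ℕ | p.Prime ∧ ¬ p ∣ m}.Nonempty := by
    obtain ⟨p, hpm, hp⟩ := Nat.exists_infinite_primes (m + 1)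
    exact ⟨p, hp, fun hdvd => absurd (Nat.le_of_dvd hm hdvd) (by omega)⟩
  have hq := Nat.sInf_mem hne
  set q := leastPrimeCoprime m with hqdef
  obtain ⟨hqp, hqnd⟩ := hq
  have hdvd : ∀ p : ℕ, p.Prime → p < q → p ∣ m := by
    intro p hp hpq
    by_contra h
    have : q ≤ p := by
      rw [hqdef, leastPrimeCoprime]
      exact Nat.sInf_le (show p ∈ {p : ℕ | p.Prime ∧ ¬ p ∣ m} from ⟨hp, h⟩)
    omega
  set s := (Finset.range q).filter Nat.Prime with hsdef
  have hprod : (∏ p ∈ s, p) ∣ m :=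
    Finset.prod_primes_dvd m (fun p hp => (Finset.mem_filter.1 hp).2.prime)
      (fun p hp => hdvd p (Finset.mem_filter.1 hp).2 (Finset.mem_range.1 (Finset.mem_filter.1 hp).1))
  refine ⟨s.card, ?_, ?_⟩
  · calc (s.card + 1)! ≤ ∏ p ∈ s, p :=
        factorial_le_prod s (fun x hx => (Finset.mem_filter.1 hx).2.two_le)
      _ ≤ m := Nat.le_of_dvd hm hprod
  · have hcount : s.card = Nat.count Nat.Prime q := by
      rw [Nat.count_eq_card_filter_range]
    have hnth : Nat.nth Nat.Prime (Nat.count Nat.Prime q) = q := Nat.nth_count hqp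
    calc q = Nat.nth Nat.Prime (Nat.count Nat.Prime q) := hnth.symm
      _ ≤ 2 ^ (Nat.count Nat.Prime q + 1) := nth_prime_le_two_pow _
      _ = 2 ^ (s.card + 1) := by rw [hcount]

theorem stmt_6 (ε : ℝ) (hε0 : 0 < ε) (hε : ε < 1 / 2) :
    ∃ C : ℕ, 0 < C ∧ ∀ n : ℕ, C ≤ n → ∀ m : ℕ, 0 < m →
      (m : ℝ) < (n : ℝ) ^ (2 - ε) →
      (2 : ℝ) ^ (1 / ε) * (leastPrimeCoprime m : ℝ) ^ ((2 - ε) / ε) < n := by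
  set t : ℕ := ⌈(8:ℝ)/ε⌉₊ with htdef
  have ht : (8:ℝ)/ε ≤ t := Nat.le_ceil _
  have htpos : 0 < t := Nat.ceil_pos.2 (by positivity)
  set a : ℕ := 2 ^ t with hadef
  have ha1 : 1 ≤ a := Nat.one_le_two_pow
  set D : ℝ := ((a ^ a : ℕ) : ℝ) with hDdef
  have hD1 : (1:ℝ) ≤ D := by
    have h : 1 ≤ a ^ a := Nat.one_le_pow _ _ (by omega)
    rw [hDdef]
    exact_mod_cast h
  set β : ℝ := (2 - ε)/ε with hβdef
  have h2ε : (0:ℝ) < 2 - ε := by linarith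
  have hβpos : 0 < β := by positivity
  set E : ℝ := 2 ^ ((1:ℝ)/ε) * D ^ β with hEdef
  have hE0 : 0 < E := by positivity
  clear_value t a D β E
  refine ⟨⌈E^2⌉₊ + 1, Nat.succ_pos _, ?_⟩
  intro n hn m hm hmn
  have hn1 : (1:ℝ) ≤ n := by
    have : 1 ≤ n := le_trans (Nat.succ_le_succ (Nat.zero_le _)) hn
    exact_mod_cast this
  have hnE : E^2 < n := by
    calc E^2 ≤ (⌈E^2⌉₊ : ℝ) := Nat.le_ceil _
      _ < ((⌈E^2⌉₊ + 1 : ℕ) : ℝ) := by push_cast; linarith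
      _ ≤ n := by exact_mod_cast hn
  obtain ⟨k, hk1, hk2⟩ := key_lemma m hm
  have hnat : a ^ (k+1) ≤ a^a * m :=
    le_trans (pow_le_pow_self_mul_factorial a (k+1) ha1) (Nat.mul_le_mul_left _ hk1)
  have hm1 : (1:ℝ) ≤ m := by exact_mod_cast hm
  set q := leastPrimeCoprime m with hqdef
  have hq0 : (0:ℝ) ≤ q := Nat.cast_nonneg _
  have htR : (0:ℝ) < t := by exact_mod_cast htpos
  have h1t : (1:ℝ)/t ≤ ε/8 := by
    rw [div_le_div_iff₀ htR (by norm_num)]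
    rw [div_le_iff₀ hε0] at ht
    nlinarith
  have h1t0 : (0:ℝ) ≤ 1/t := by positivity
  have step1 : ((2:ℝ) ^ (k+1) : ℝ) = (((a:ℝ)) ^ (k+1)) ^ ((1:ℝ)/t) := by
    have h' : ((a:ℝ)) ^ (k+1) = ((2:ℝ)^(k+1))^t := by
      rw [hadef]; push_cast; rw [← pow_mul, ← pow_mul, Nat.mul_comm]
    rw [h', ← Real.rpow_natCast ((2:ℝ)^(k+1)) t, ← Real.rpow_mul (by positivity),
      mul_one_div, div_self (ne_of_gt htR), Real.rpow_one]
  have H1 : (q:ℝ) ≤ D * (m:ℝ) ^ (ε/8) := by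
    have c1 : (q:ℝ) ≤ (2:ℝ)^(k+1) := by exact_mod_cast hk2
    have c2 : ((a:ℝ))^(k+1) ≤ D * m := by
      calc ((a:ℝ))^(k+1) = ((a^(k+1) : ℕ):ℝ) := by push_cast; ring
        _ ≤ ((a^a*m : ℕ):ℝ) := by exact_mod_cast hnat
        _ = D * m := by rw [hDdef]; push_cast; ring
    have c3 : (((a:ℝ))^(k+1)) ^ ((1:ℝ)/t) ≤ (D * m) ^ ((1:ℝ)/t) :=
      Real.rpow_le_rpow (by positivity) c2 h1t0
    have c4 : (D * (m:ℝ)) ^ ((1:ℝ)/t) = D^((1:ℝ)/t) * (m:ℝ)^((1:ℝ)/t) :=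
      Real.mul_rpow (by linarith) (by positivity)
    have c5 : D^((1:ℝ)/t) ≤ D := by
      nth_rewrite 2 [← Real.rpow_one D]
      exact Real.rpow_le_rpow_of_exponent_le hD1 (by
        rw [div_le_one htR]; exact_mod_cast htpos)
    have c6 : (m:ℝ)^((1:ℝ)/t) ≤ (m:ℝ)^(ε/8) := Real.rpow_le_rpow_of_exponent_le hm1 h1t
    calc (q:ℝ) ≤ (2:ℝ)^(k+1) := c1
      _ = (((a:ℝ))^(k+1))^((1:ℝ)/t) := step1
      _ ≤ (D * m)^((1:ℝ)/t) := c3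
      _ = D^((1:ℝ)/t) * (m:ℝ)^((1:ℝ)/t) := c4
      _ ≤ D * (m:ℝ)^(ε/8) :=
        mul_le_mul c5 c6 (by positivity) (by linarith)
  have H2 : (q:ℝ)^β ≤ D^β * (m:ℝ)^((2-ε)/8) := by
    have h' := Real.rpow_le_rpow hq0 H1 hβpos.le
    rw [Real.mul_rpow (by linarith) (by positivity),
      ← Real.rpow_mul (by positivity)] at h'
    have heq : (ε/8) * β = (2-ε)/8 := by
      rw [hβdef]; field_simp
    rwa [heq] at h'
  have H3 : (m:ℝ)^((2-ε)/8) < ((n:ℝ)^(2-ε))^((2-ε)/8) :=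
    Real.rpow_lt_rpow (by positivity) hmn (by linarith)
  have H4 : ((n:ℝ)^(2-ε))^((2-ε)/8) = (n:ℝ)^((2-ε)*((2-ε)/8)) :=
    (Real.rpow_mul (by linarith) _ _).symm
  have H5 : (n:ℝ)^((2-ε)*((2-ε)/8)) ≤ (n:ℝ)^((1:ℝ)/2) :=
    Real.rpow_le_rpow_of_exponent_le hn1 (by nlinarith)
  have hs : (n:ℝ)^((1:ℝ)/2) * (n:ℝ)^((1:ℝ)/2) = n := by
    rw [← Real.rpow_add (by linarith)]
    norm_num
  have hsnn : (0:ℝ) ≤ (n:ℝ)^((1:ℝ)/2) := Real.rpow_nonneg (by linarith) _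
  have hEle : E ≤ (n:ℝ)^((1:ℝ)/2) := by
    by_contra hcon
    push_neg at hcon
    have hlt : (n:ℝ) < E * E := by
      calc (n:ℝ) = (n:ℝ)^((1:ℝ)/2) * (n:ℝ)^((1:ℝ)/2) := hs.symm
        _ < E * E := mul_lt_mul'' hcon hcon hsnn hsnn
    have hsq : E * E = E^2 := (sq E).symm
    linarith
  have H6 : E * (n:ℝ)^((1:ℝ)/2) ≤ n := by
    calc E * (n:ℝ)^((1:ℝ)/2) ≤ (n:ℝ)^((1:ℝ)/2) * (n:ℝ)^((1:ℝ)/2) :=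
        mul_le_mul_of_nonneg_right hEle hsnn
      _ = n := hs
  calc (2:ℝ) ^ (1/ε) * (q:ℝ)^β ≤ (2:ℝ) ^ (1/ε) * (D^β * (m:ℝ)^((2-ε)/8)) := by
        apply mul_le_mul_of_nonneg_left H2 (by positivity)
    _ = E * (m:ℝ)^((2-ε)/8) := by rw [hEdef]; ring_nf
    _ < E * (n:ℝ)^((1:ℝ)/2) := by
        apply mul_lt_mul_of_pos_left _ hE0
        calc (m:ℝ)^((2-ε)/8) < ((n:ℝ)^(2-ε))^((2-ε)/8) := H3
          _ = (n:ℝ)^((2-ε)*((2-ε)/8)) := H4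
          _ ≤ (n:ℝ)^((1:ℝ)/2) := H5
    _ ≤ n := H6
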